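/- Let p be an odd prime and let c, d, i be integers with p not dividing d. Then Σ_{j=0}^{p-1} (j/p)·((i²+3cij+dj²)/p) = (i/p) · Σ_{x=0}^{p-1} ((x³−(3c²−d)x+c(2c²−d))/p), where (·/p) is the Legendre symbol. -/

import Mathlib

open Finset

private lemma sum_range_zmod_aux {p : ℕ} [NeZero p] (f : ZMod p → ℤ) :
    ∑ j ∈ Finset.range p, f (j : ZMod p) = ∑ x : ZMod p, f x := by
  refine Finset.sum_nbij' (fun j => (j : ZMod p)) (fun x => x.val) ?_ ?_ ?_ ?_ ?_
  · intro a _; exact Finset.mem_univ _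
  · intro a _; exact Finset.mem_range.mpr (ZMod.val_lt a)
  · intro a ha; exact ZMod.val_cast_of_lt (Finset.mem_range.mp ha)
  · intro a _; exact ZMod.natCast_rightInverse a
  · intro a _; rfl

theorem stmt_2 (p : ℕ) [Fact p.Prime] (hp2 : p ≠ 2) (c d i : ℤ)
    (hd : ¬ (p : ℤ) ∣ d) :
    ∑ j ∈ Finset.range p,
        legendreSym p j * legendreSym p (i ^ 2 + 3 * c * i * j + d * j ^ 2)
      = legendreSym p i *
          ∑ x ∈ Finset.range p,
            legendreSym p (x ^ 3 - (3 * c ^ 2 - d) * x + c * (2 * c ^ 2 - d)) := by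
  haveI : NeZero p := ⟨(Fact.out : p.Prime).ne_zero⟩
  have hchar : ringChar (ZMod p) ≠ 2 := by
    rw [ZMod.ringChar_zmod_n]; exact hp2
  set χ := quadraticChar (ZMod p) with hχ
  set C : ZMod p := (c : ZMod p) with hC
  set D : ZMod p := (d : ZMod p) with hD
  set I : ZMod p := (i : ZMod p) with hI
  have hz : χ 0 = 0 := by rw [hχ]; exact quadraticChar_zero
  -- χ(x)^3 = χ(x)
  have hcube : ∀ x : ZMod p, χ x ^ 3 = χ x := by
    intro x
    rcases eq_or_ne x 0 with h | h
    · rw [h, hz]; ring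
    · rw [pow_succ, quadraticChar_sq_one h, one_mul]
  have hL : ∑ j ∈ Finset.range p,
      legendreSym p j * legendreSym p (i ^ 2 + 3 * c * i * j + d * j ^ 2)
      = ∑ j : ZMod p, χ j * χ (I ^ 2 + 3 * C * I * j + D * j ^ 2) := by
    rw [← sum_range_zmod_aux (fun j => χ j * χ (I ^ 2 + 3 * C * I * j + D * j ^ 2))]
    refine Finset.sum_congr rfl fun j _ => ?_
    unfold χ C D I
    rw [legendreSym, legendreSym]
    push_cast
    ring_nf
  have hR : ∑ x ∈ Finset.range p,
      legendreSym p (x ^ 3 - (3 * c ^ 2 - d) * x + c * (2 * c ^ 2 - d))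
      = ∑ x : ZMod p, χ (x ^ 3 - (3 * C ^ 2 - D) * x + C * (2 * C ^ 2 - D)) := by
    rw [← sum_range_zmod_aux (fun x => χ (x ^ 3 - (3 * C ^ 2 - D) * x + C * (2 * C ^ 2 - D)))]
    refine Finset.sum_congr rfl fun x _ => ?_
    unfold χ C D
    rw [legendreSym]
    push_cast
    ring_nf
  have hLi : (legendreSym p i : ℤ) = χ I := by rw [legendreSym]
  rw [hL, hR, hLi]
  rcases eq_or_ne I 0 with hI0 | hI0
  · -- i ≡ 0 : both sides vanish
    rw [hI0, hz, zero_mul]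
    have key : ∀ j : ZMod p, χ j * χ ((0:ZMod p) ^ 2 + 3 * C * 0 * j + D * j ^ 2)
        = χ D * χ j := by
      intro j
      have e : (0:ZMod p) ^ 2 + 3 * C * 0 * j + D * j ^ 2 = D * j ^ 2 := by ring
      rw [e, map_mul, map_pow]
      rcases eq_or_ne j 0 with h | h
      · rw [h, hz]; ring
      · rw [quadraticChar_sq_one h]; ring
    calc ∑ j : ZMod p, χ j * χ ((0:ZMod p) ^ 2 + 3 * C * 0 * j + D * j ^ 2)
        = ∑ j : ZMod p, χ D * χ j := Finset.sum_congr rfl fun j _ => key j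
      _ = χ D * ∑ j : ZMod p, χ j := by rw [Finset.mul_sum]
      _ = 0 := by rw [hχ, quadraticChar_sum_zero hchar, mul_zero]
  · -- i ≢ 0 : substitution j = I * u⁻¹
    have hinv : Function.Involutive (fun u : ZMod p => I * u⁻¹) := by
      intro u
      rcases eq_or_ne u 0 with h | h
      · simp [h]
      · field_simp
    have hsub : ∑ j : ZMod p, χ j * χ (I ^ 2 + 3 * C * I * j + D * j ^ 2)
        = ∑ u : ZMod p, χ (I * u⁻¹) * χ (I ^ 2 + 3 * C * I * (I * u⁻¹) + D * (I * u⁻¹) ^ 2) := by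
      exact (Equiv.sum_comp hinv.toPerm
        (fun j => χ j * χ (I ^ 2 + 3 * C * I * j + D * j ^ 2))).symm
    rw [hsub]
    have key : ∀ u : ZMod p,
        χ (I * u⁻¹) * χ (I ^ 2 + 3 * C * I * (I * u⁻¹) + D * (I * u⁻¹) ^ 2)
        = χ I * χ (u ^ 3 + 3 * C * u ^ 2 + D * u) := by
      intro u
      rcases eq_or_ne u 0 with h | h
      · rw [h, inv_zero, mul_zero, hz, zero_mul,
          show (0:ZMod p) ^ 3 + 3 * C * 0 ^ 2 + D * 0 = 0 from by ring, hz, mul_zero]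
      · have hQ : I ^ 2 + 3 * C * I * (I * u⁻¹) + D * (I * u⁻¹) ^ 2
            = (I * u⁻¹) ^ 2 * (u ^ 2 + 3 * C * u + D) := by
          field_simp
        have hinvu : χ u⁻¹ = χ u := by
          have h1 : χ u⁻¹ * χ u = χ u * χ u := by
            rw [← map_mul, inv_mul_cancel₀ h, ← pow_two, quadraticChar_sq_one h, hχ]
            exact (quadraticChar (ZMod p)).map_one
          have hne : χ u ≠ 0 := by
            have h2 : χ u ^ 2 = 1 := quadraticChar_sq_one h
            intro h0
            rw [h0] at h2; simp at h2
          exact mul_right_cancel₀ hne h1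
        rw [hQ, ← map_mul,
          show I * u⁻¹ * ((I * u⁻¹) ^ 2 * (u ^ 2 + 3 * C * u + D))
            = (I * u⁻¹) ^ 3 * (u ^ 2 + 3 * C * u + D) from by ring,
          map_mul, map_pow, hcube, map_mul, hinvu,
          show u ^ 3 + 3 * C * u ^ 2 + D * u = u * (u ^ 2 + 3 * C * u + D) from by ring,
          map_mul]
        ring
    rw [Finset.sum_congr rfl fun u _ => key u, ← Finset.mul_sum]
    congr 1
    have hshift : ∑ u : ZMod p, χ (u ^ 3 + 3 * C * u ^ 2 + D * u)
        = ∑ x : ZMod p, χ ((x - C) ^ 3 + 3 * C * (x - C) ^ 2 + D * (x - C)) := by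
      exact (Equiv.sum_comp (Equiv.subRight C)
        (fun u => χ (u ^ 3 + 3 * C * u ^ 2 + D * u))).symm
    rw [hshift]
    refine Finset.sum_congr rfl fun x _ => ?_
    congr 1
    ring
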